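/- Let x : [0,∞) → C be a continuously differentiable solution of x'(t) + x(t) = θ(t) f(x(t)) + (1 − θ(t)) T(x(t)) with x(t) ∈ C for all t ≥ 0, where θ : [0,∞) → (0,1] is continuous. Let q* ∈ Fix(T) satisfy ⟨f(q*) − q*, z − q*⟩ ≤ 0 for all z ∈ Fix(T). Then sup_{t ≥ 0} ‖x(t) − q*‖ ≤ max( ‖x(0) − q*‖, ‖f(q*) − q*‖ / (1 − α) ); in particular the trajectory is bounded. -/

import Mathlib

open RealInnerProductSpace

theorem stmt5 {H : Type*} [NormedAddCommGroup H] [InnerProductSpace ℝ H]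
    [CompleteSpace H]
    (C : Set H) (hCne : C.Nonempty) (hCcl : IsClosed C) (hCconv : Convex ℝ C)
    (f T : H → H) (hfC : Set.MapsTo f C C) (hTC : Set.MapsTo T C C)
    (α : ℝ) (hα0 : 0 ≤ α) (hα1 : α < 1)
    (hf : ∀ x ∈ C, ∀ y ∈ C, ‖f x - f y‖ ≤ α * ‖x - y‖)
    (hT : ∀ x ∈ C, ∀ y ∈ C, ‖T x - T y‖ ≤ ‖x - y‖)
    (θ : ℝ → ℝ) (hθc : Continuous θ) (hθ : ∀ t, 0 ≤ t → 0 < θ t ∧ θ t ≤ 1)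
    (x x' : ℝ → H) (hx' : ∀ t, 0 ≤ t → HasDerivAt x (x' t) t)
    (hx'c : Continuous x')
    (hode : ∀ t, 0 ≤ t →
      x' t + x t = θ t • f (x t) + (1 - θ t) • T (x t))
    (hxC : ∀ t, 0 ≤ t → x t ∈ C)
    (q : H) (hq : q ∈ C ∧ T q = q)
    (hVP : ∀ z, z ∈ C ∧ T z = z → ⟪f q - q, z - q⟫ ≤ 0) :
    ∀ t, 0 ≤ t →
      ‖x t - q‖ ≤ max ‖x 0 - q‖ (‖f q - q‖ / (1 - α)) := by
  have h1α : 0 < 1 - α := by linarith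
  set K : ℝ := ‖f q - q‖ / (1 - α) with hKdef
  set M : ℝ := max ‖x 0 - q‖ K with hMdef
  have hK0 : 0 ≤ K := div_nonneg (norm_nonneg _) h1α.le
  have hM0 : 0 ≤ M := le_trans hK0 (le_max_right _ _)
  have hMK : K ≤ M := le_max_right _ _
  have hKb : K * (1 - α) = ‖f q - q‖ := div_mul_cancel₀ _ h1α.ne'
  -- key derivative estimate
  have key : ∀ u, 0 ≤ u → M < ‖x u - q‖ → ⟪x' u, x u - q⟫ ≤ 0 := by
    intro u hu hMr
    obtain ⟨hθ0, hθ1⟩ := hθ u hu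
    have hyC := hxC u hu
    have hx'eq : x' u = (θ u • f (x u) + (1 - θ u) • T (x u)) - x u :=
      eq_sub_of_add_eq (hode u hu)
    have hexp : ⟪x' u, x u - q⟫ =
        θ u * ⟪f (x u) - f q, x u - q⟫ + θ u * ⟪f q - q, x u - q⟫
          + (1 - θ u) * ⟪T (x u) - T q, x u - q⟫ - ⟪x u - q, x u - q⟫ := by
      rw [hx'eq, hq.2]
      simp only [inner_sub_left, inner_add_left, real_inner_smul_left,
        inner_sub_right]
      ring
    have hfn : ‖f (x u) - f q‖ ≤ α * ‖x u - q‖ := hf (x u) hyC q hq.1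
    have hTn : ‖T (x u) - T q‖ ≤ ‖x u - q‖ := hT (x u) hyC q hq.1
    have c1 : ⟪f (x u) - f q, x u - q⟫ ≤ α * ‖x u - q‖ * ‖x u - q‖ :=
      le_trans (real_inner_le_norm _ _)
        (mul_le_mul_of_nonneg_right hfn (norm_nonneg _))
    have c2 : ⟪f q - q, x u - q⟫ ≤ ‖f q - q‖ * ‖x u - q‖ :=
      real_inner_le_norm _ _
    have c3 : ⟪T (x u) - T q, x u - q⟫ ≤ ‖x u - q‖ * ‖x u - q‖ :=
      le_trans (real_inner_le_norm _ _)
        (mul_le_mul_of_nonneg_right hTn (norm_nonneg _))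
    have hdd : ⟪x u - q, x u - q⟫ = ‖x u - q‖ * ‖x u - q‖ :=
      real_inner_self_eq_norm_mul_norm _
    have hb : ‖f q - q‖ ≤ (1 - α) * ‖x u - q‖ := by
      rw [← hKb]; nlinarith [lt_of_le_of_lt hMK hMr]
    have hr0 : (0:ℝ) ≤ ‖x u - q‖ := norm_nonneg _
    rw [hexp, hdd]
    nlinarith [mul_le_mul_of_nonneg_left c1 hθ0.le,
      mul_le_mul_of_nonneg_left c2 hθ0.le,
      mul_le_mul_of_nonneg_left c3 (by linarith : (0:ℝ) ≤ 1 - θ u),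
      mul_le_mul_of_nonneg_right hb (mul_pos hθ0 (lt_of_le_of_lt hM0 hMr)).le]
  -- squared distance function
  set φ : ℝ → ℝ := fun u => ‖x u - q‖ ^ 2 with hφdef
  have hφd : ∀ u, 0 ≤ u → HasDerivAt φ (2 * ⟪x' u, x u - q⟫) u := by
    intro u hu
    have hd : HasDerivAt (fun t => x t - q) (x' u) u := (hx' u hu).sub_const q
    have := hd.inner ℝ hd
    have heq : (fun t => ⟪x t - q, x t - q⟫) = φ := by
      funext t; simp [hφdef, real_inner_self_eq_norm_sq]
    rw [heq] at this
    exact this.congr_deriv (by rw [real_inner_comm (x u - q) (x' u)]; ring)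
  intro t₀ ht₀
  by_contra hcon
  push_neg at hcon
  have hcont : ContinuousOn φ (Set.Icc 0 t₀) := fun u hu =>
    ((hφd u hu.1).continuousAt).continuousWithinAt
  set S : Set ℝ := Set.Icc 0 t₀ ∩ φ ⁻¹' (Set.Iic (M ^ 2)) with hSdef
  have hS0 : (0:ℝ) ∈ S := by
    constructor
    · exact ⟨le_refl _, ht₀⟩
    · simp only [Set.mem_preimage, Set.mem_Iic, hφdef]
      exact pow_le_pow_left₀ (norm_nonneg _) (le_max_left _ _) 2
  have hScl : IsClosed S :=
    hcont.preimage_isClosed_of_isClosed isClosed_Icc isClosed_Iic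
  have hSbdd : BddAbove S := ⟨t₀, fun u hu => hu.1.2⟩
  set s : ℝ := sSup S with hsdef
  have hsS : s ∈ S := hScl.csSup_mem ⟨0, hS0⟩ hSbdd
  have hs0 : 0 ≤ s := hsS.1.1
  have hsφ : φ s ≤ M ^ 2 := hsS.2
  have hφt₀ : M ^ 2 < φ t₀ := by
    simpa [hφdef] using pow_lt_pow_left₀ hcon hM0 (by norm_num)
  have hst : s < t₀ := lt_of_le_of_ne hsS.1.2 (by
    intro he; rw [he] at hsφ; exact absurd hsφ (not_le.mpr hφt₀))
  have hgt : ∀ u ∈ Set.Ioo s t₀, M ^ 2 < φ u := by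
    intro u hu
    by_contra hle
    push_neg at hle
    have : u ∈ S := ⟨⟨le_trans hs0 hu.1.le, hu.2.le⟩, hle⟩
    exact absurd (le_csSup hSbdd this) (not_le.mpr hu.1)
  have hanti : AntitoneOn φ (Set.Icc s t₀) := by
    apply antitoneOn_of_deriv_nonpos (convex_Icc s t₀)
    · exact fun u hu => ((hφd u (le_trans hs0 hu.1)).continuousAt).continuousWithinAt
    · intro u hu
      rw [interior_Icc] at hu
      exact ((hφd u (le_trans hs0 hu.1.le)).differentiableAt).differentiableWithinAt
    · intro u hu
      rw [interior_Icc] at hu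
      have hu0 : 0 ≤ u := le_trans hs0 hu.1.le
      rw [(hφd u hu0).deriv]
      have hM : M < ‖x u - q‖ := by
        have := hgt u hu
        exact lt_of_pow_lt_pow_left₀ 2 (norm_nonneg _) (by simpa [hφdef] using this)
      have := key u hu0 hM
      linarith
  have : φ t₀ ≤ φ s :=
    hanti ⟨le_refl _, hst.le⟩ ⟨hst.le, le_refl _⟩ hst.le
  linarith
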